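/- The map x ↦ |x|^p on ℂ ≅ ℝ² is twice continuously differentiable for p ≥ 2, and its Hessian quadratic form at φ ∈ ℂ applied to a direction v ∈ ℂ equals p|φ|^{p-2}|v|² + p(p-2)|φ|^{p-4}(Re(φ v̄))², where the second term is interpreted as 0 when φ = 0 and p > 2. In particular the Hessian quadratic form is bounded above by p(p-1)|φ|^{p-2}|v|². -/

import Mathlib

noncomputable section

namespace Hess

set_option maxHeartbeats 1000000
set_option synthInstance.maxHeartbeats 400000

/-- The real bilinear form `(z, w) ↦ Re (z * conj w)` on `ℂ`. -/
def B : ℂ →L[ℝ] ℂ →L[ℝ] ℝ :=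
  LinearMap.mkContinuous₂
    (LinearMap.mk₂ ℝ (fun z w => (z * (starRingEnd ℂ) w).re)
      (fun a b c => by simp [add_mul])
      (fun r a b => by simp [Complex.real_smul]; ring)
      (fun a b c => by simp [mul_add])
      (fun r a b => by simp [Complex.real_smul]; ring))
    1 (fun z w => by
      simpa [map_mul, Complex.norm_conj] using
        (Complex.abs_re_le_norm (z * (starRingEnd ℂ) w)))

lemma B_apply (z w : ℂ) : B z w = (z * (starRingEnd ℂ) w).re := rfl

lemma B_symm (z w : ℂ) : B z w = B w z := by simp [B_apply]; ring

lemma B_self (z : ℂ) : B z z = ‖z‖ ^ 2 := by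
  simp [B_apply, Complex.mul_conj, ← Complex.normSq_eq_norm_sq]

lemma abs_B_le (z w : ℂ) : |B z w| ≤ ‖z‖ * ‖w‖ := by
  rw [B_apply]
  simpa [map_mul, Complex.norm_conj] using
    (Complex.abs_re_le_norm (z * (starRingEnd ℂ) w))

lemma norm_B_le (z : ℂ) : ‖B z‖ ≤ ‖z‖ := by
  refine ContinuousLinearMap.opNorm_le_bound _ (norm_nonneg z) fun w => ?_
  simpa using abs_B_le z w

lemma hasFDerivAt_normSq (z : ℂ) :
    HasFDerivAt (fun z : ℂ => ‖z‖ ^ 2) ((2:ℝ) • B z) z := by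
  have hprod : HasFDerivAt (fun w : ℂ => (w, w))
      ((ContinuousLinearMap.id ℝ ℂ).prod (ContinuousLinearMap.id ℝ ℂ)) z :=
    (hasFDerivAt_id z).prodMk (hasFDerivAt_id z)
  have h := HasFDerivAt.comp (f := fun w : ℂ => (w, w))
    (g := fun q : ℂ × ℂ => B q.1 q.2) z
    (B.isBoundedBilinearMap.hasFDerivAt (z, z)) hprod
  have e1 : ((fun q : ℂ × ℂ => B q.1 q.2) ∘ fun w : ℂ => (w, w)) = fun z : ℂ => ‖z‖ ^ 2 :=
    funext fun w => B_self w
  rw [e1] at h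
  refine h.congr_fderiv ?_
  ext w
  simp [IsBoundedBilinearMap.deriv_apply, B_symm w z, two_smul]

lemma pow_eq1 (p : ℝ) (z : ℂ) : ((‖z‖ ^ 2 : ℝ)) ^ (p/2 - 1) = ‖z‖ ^ (p - 2) := by
  rw [← Real.rpow_natCast ‖z‖ 2, ← Real.rpow_mul (norm_nonneg z)]
  norm_num
  ring_nf

lemma pow_eq2 (p : ℝ) (z : ℂ) : ((‖z‖ ^ 2 : ℝ)) ^ (p/2 - 2) = ‖z‖ ^ (p - 4) := by
  rw [← Real.rpow_natCast ‖z‖ 2, ← Real.rpow_mul (norm_nonneg z)]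
  norm_num
  ring_nf

/-- The first derivative of `z ↦ ‖z‖ ^ p`. -/
def F (p : ℝ) (z : ℂ) : ℂ →L[ℝ] ℝ := (p * (‖z‖ ^ 2 : ℝ) ^ (p/2 - 1)) • B z

/-- The second derivative of `z ↦ ‖z‖ ^ p`. -/
def G (p : ℝ) (z : ℂ) : ℂ →L[ℝ] ℂ →L[ℝ] ℝ :=
  (p * (‖z‖ ^ 2 : ℝ) ^ (p/2 - 1)) • B
  + (2 * (p * (p/2 - 1)) * ((‖z‖ ^ 2 : ℝ) ^ (p/2 - 2))) •
      (ContinuousLinearMap.smulRightL ℝ ℂ (ℂ →L[ℝ] ℝ) (B z) (B z))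

lemma smulRightL_apply (c f : ℂ →L[ℝ] ℝ) :
    ContinuousLinearMap.smulRightL ℝ ℂ (ℂ →L[ℝ] ℝ) c f = c.smulRight f := rfl

lemma rpow_succ (x : ℝ) (a : ℝ) (ha : a + 1 ≠ 0) : x ^ (a + 1) = x ^ a * x := by
  rcases eq_or_ne x 0 with rfl | hx
  · rw [Real.zero_rpow ha]
    simp
  · exact Real.rpow_add_one hx a

lemma hasFDerivAt_f (p : ℝ) (hp : 2 ≤ p) (z : ℂ) :
    HasFDerivAt (fun z : ℂ => ‖z‖ ^ p) (F p z) z := by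
  have h1 : 1 ≤ p / 2 := by linarith
  have h := (Real.hasDerivAt_rpow_const (p := p/2) (x := ‖z‖ ^ 2)
    (Or.inr h1)).comp_hasFDerivAt z (hasFDerivAt_normSq z)
  have e : ((fun x : ℝ => x ^ (p/2)) ∘ fun z : ℂ => ‖z‖ ^ 2) = fun z : ℂ => ‖z‖ ^ p := by
    funext w
    simp only [Function.comp]
    rw [← Real.rpow_natCast ‖w‖ 2, ← Real.rpow_mul (norm_nonneg w)]
    congr 1
    push_cast
    ring
  rw [e] at h
  have e2 : (p / 2 * (‖z‖ ^ 2 : ℝ) ^ (p / 2 - 1)) • ((2:ℝ) • B z) = F p z := by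
    rw [smul_smul]
    unfold F
    congr 1
    ring
  exact e2 ▸ h

lemma hasFDerivAt_F_ne (p : ℝ) (z : ℂ) (hz : z ≠ 0) :
    HasFDerivAt (F p) (G p z) z := by
  have hx : (‖z‖ ^ 2 : ℝ) ≠ 0 := by simpa using hz
  have hc : HasFDerivAt (fun z : ℂ => p * (‖z‖ ^ 2 : ℝ) ^ (p/2 - 1))
      ((p * ((p/2 - 1) * (‖z‖ ^ 2 : ℝ) ^ (p/2 - 2)) * 2) • B z) z := by
    have h := (Real.hasDerivAt_rpow_const (p := p/2 - 1) (x := ‖z‖ ^ 2)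
      (Or.inl hx)).comp_hasFDerivAt z (hasFDerivAt_normSq z)
    have h2 := h.const_mul p
    have e : p/2 - 1 - 1 = p/2 - 2 := by ring
    rw [e] at h2
    have e0 : p • (((p/2 - 1) * (‖z‖ ^ 2 : ℝ) ^ (p/2 - 2)) • ((2:ℝ) • B z))
        = (p * ((p/2 - 1) * (‖z‖ ^ 2 : ℝ) ^ (p/2 - 2)) * 2) • B z := by
      rw [smul_smul, smul_smul]
    exact e0 ▸ h2
  have hB : HasFDerivAt (fun z : ℂ => B z) B z := B.hasFDerivAt
  have h := hc.smul hB
  have e : (p * (‖z‖ ^ 2 : ℝ) ^ (p/2 - 1)) • B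
      + ((p * ((p/2 - 1) * (‖z‖ ^ 2 : ℝ) ^ (p/2 - 2)) * 2) • B z).smulRight (B z)
      = G p z := by
    unfold G
    congr 1
    ext v w
    simp [ContinuousLinearMap.smulRight_apply, smulRightL_apply]
    ring
  rw [e] at h
  exact h

lemma F_two : F 2 = fun y : ℂ => (2:ℝ) • B y := by
  funext y
  unfold F
  norm_num

lemma hasFDerivAt_F_two (z : ℂ) : HasFDerivAt (F 2) (G 2 z) z := by
  rw [F_two]
  have h : HasFDerivAt (fun y : ℂ => (2:ℝ) • B y) ((2:ℝ) • B) z :=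
    B.hasFDerivAt.const_smul (2:ℝ)
  have e : (2:ℝ) • B = G 2 z := by
    unfold G
    norm_num
    ext v w
    simp
  exact e ▸ h

lemma norm_F_le (p : ℝ) (hp : 2 ≤ p) (z : ℂ) : ‖F p z‖ ≤ p * ‖z‖ ^ (p - 1) := by
  have h0 : (0:ℝ) ≤ p := by linarith
  have h2 : ‖F p z‖ = (p * ‖z‖ ^ (p - 2)) * ‖B z‖ := by
    have hns := norm_smul (p * (‖z‖ ^ 2 : ℝ) ^ (p/2 - 1)) (B z)
    unfold F
    rw [hns, pow_eq1, Real.norm_eq_abs, abs_of_nonneg (by positivity)]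
  rw [h2]
  have e : ‖z‖ ^ (p - 1) = ‖z‖ ^ (p - 2) * ‖z‖ := by
    rw [show p - 1 = (p - 2) + 1 by ring, rpow_succ _ _ (by intro h; linarith)]
  rw [e, ← mul_assoc]
  exact mul_le_mul_of_nonneg_left (norm_B_le z)
    (by positivity)

lemma B_zero : B 0 = 0 := map_zero B

lemma Q_zero : ContinuousLinearMap.smulRightL ℝ ℂ (ℂ →L[ℝ] ℝ) (B 0) (B 0) = 0 := by
  rw [B_zero]
  simp

lemma G_zero_eq (p : ℝ) (hp : 2 < p) : G p 0 = 0 := by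
  have h1 : ((0:ℝ)) ^ (p/2 - 1) = 0 := Real.zero_rpow (by intro h; nlinarith [h])
  unfold G
  rw [show ((‖(0:ℂ)‖ ^ 2 : ℝ)) = 0 by norm_num, h1, Q_zero, mul_zero]
  ext v w
  simp

lemma F_zero_eq (p : ℝ) : F p 0 = 0 := by
  unfold F
  rw [B_zero, smul_zero]

lemma hasFDerivAt_F_zero_gt (p : ℝ) (hp : 2 < p) :
    HasFDerivAt (F p) (G p 0) 0 := by
  rw [G_zero_eq p hp, hasFDerivAt_iff_isLittleO_nhds_zero]
  have key : (fun z : ℂ => F p z) =o[nhds 0] fun z : ℂ => z := by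
    rw [Asymptotics.isLittleO_iff]
    intro c hc
    have hcont : ContinuousAt (fun x : ℝ => p * x ^ (p - 2)) 0 :=
      continuousAt_const.mul (Real.continuousAt_rpow_const 0 _ (Or.inr (by linarith)))
    have hz0 : p * (0:ℝ) ^ (p - 2) = 0 := by
      rw [Real.zero_rpow (by intro h; nlinarith [h])]; ring
    have ht : Filter.Tendsto (fun z : ℂ => p * ‖z‖ ^ (p - 2)) (nhds 0) (nhds 0) := by
      have := hcont.tendsto
      rw [hz0] at this
      exact this.comp tendsto_norm_zero
    have hev : ∀ᶠ z : ℂ in nhds 0, p * ‖z‖ ^ (p - 2) < c :=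
      ht.eventually_lt_const hc
    filter_upwards [hev] with z hz
    calc ‖F p z‖ ≤ p * ‖z‖ ^ (p - 1) := norm_F_le p hp.le z
      _ = (p * ‖z‖ ^ (p - 2)) * ‖z‖ := by
          rw [show p - 1 = (p - 2) + 1 by ring,
            rpow_succ _ _ (by intro h; linarith), ← mul_assoc]
      _ ≤ c * ‖z‖ := mul_le_mul_of_nonneg_right hz.le (norm_nonneg z)
  simpa [F_zero_eq p] using key

lemma hasFDerivAt_F (p : ℝ) (hp : 2 ≤ p) (z : ℂ) :
    HasFDerivAt (F p) (G p z) z := by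
  rcases eq_or_ne z 0 with rfl | hz
  · rcases eq_or_lt_of_le hp with hp2 | hp2
    · subst hp2
      exact hasFDerivAt_F_two 0
    · exact hasFDerivAt_F_zero_gt p hp2
  · exact hasFDerivAt_F_ne p z hz

lemma continuous_G (p : ℝ) (hp : 2 ≤ p) : Continuous (G p) := by
  have hc1 : Continuous fun z : ℂ => (p * (‖z‖ ^ 2 : ℝ) ^ (p/2 - 1)) • B := by
    refine Continuous.smul (f := fun z : ℂ => p * (‖z‖ ^ 2 : ℝ) ^ (p/2 - 1)) (continuous_const.mul ?_) continuous_const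
    refine continuous_iff_continuousAt.2 fun z => ?_
    exact (Real.continuousAt_rpow_const _ _ (Or.inr (by linarith))).comp
      ((continuous_norm.pow 2).continuousAt)
  have hQcont : Continuous fun z : ℂ =>
      ContinuousLinearMap.smulRightL ℝ ℂ (ℂ →L[ℝ] ℝ) (B z) (B z) := by
    exact ((ContinuousLinearMap.smulRightL ℝ ℂ (ℂ →L[ℝ] ℝ)).isBoundedBilinearMap.continuous).comp
      (B.continuous.prodMk B.continuous)
  have hc2 : Continuous fun z : ℂ =>
      (2 * (p * (p/2 - 1)) * ((‖z‖ ^ 2 : ℝ) ^ (p/2 - 2))) •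
        ContinuousLinearMap.smulRightL ℝ ℂ (ℂ →L[ℝ] ℝ) (B z) (B z) := by
    rcases eq_or_lt_of_le hp with hp2 | hp2
    · have : (2 : ℝ) * (p * (p/2 - 1)) = 0 := by rw [← hp2]; norm_num
      simp only [this, zero_mul, zero_smul]
      exact continuous_const
    · refine continuous_iff_continuousAt.2 fun z => ?_
      rcases eq_or_ne z 0 with rfl | hz
      · -- continuity at 0 via squeeze
        have hk : (0:ℝ) ≤ 2 * (p * (p/2 - 1)) := by nlinarith
        have hbound : ∀ z : ℂ,
            ‖(2 * (p * (p/2 - 1)) * ((‖z‖ ^ 2 : ℝ) ^ (p/2 - 2))) •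
              ContinuousLinearMap.smulRightL ℝ ℂ (ℂ →L[ℝ] ℝ) (B z) (B z)‖ ≤
              2 * (p * (p/2 - 1)) * ‖z‖ ^ (p - 2) := by
          intro z
          have hns := norm_smul (2 * (p * (p/2 - 1)) * ((‖z‖ ^ 2 : ℝ) ^ (p/2 - 2)))
            (ContinuousLinearMap.smulRightL ℝ ℂ (ℂ →L[ℝ] ℝ) (B z) (B z))
          rw [hns]
          have hQ : ‖ContinuousLinearMap.smulRightL ℝ ℂ (ℂ →L[ℝ] ℝ) (B z) (B z)‖
              ≤ ‖z‖ * ‖z‖ := by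
            rw [smulRightL_apply, ContinuousLinearMap.norm_smulRight_apply]
            exact mul_le_mul (norm_B_le z) (norm_B_le z) (norm_nonneg _) (norm_nonneg _)
          have habs : ‖(2 * (p * (p/2 - 1)) * ((‖z‖ ^ 2 : ℝ) ^ (p/2 - 2)))‖
              = 2 * (p * (p/2 - 1)) * ‖z‖ ^ (p - 4) := by
            rw [pow_eq2, Real.norm_eq_abs, abs_of_nonneg]
            positivity
          rw [habs]
          calc 2 * (p * (p/2 - 1)) * ‖z‖ ^ (p - 4) *
                ‖ContinuousLinearMap.smulRightL ℝ ℂ (ℂ →L[ℝ] ℝ) (B z) (B z)‖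
              ≤ 2 * (p * (p/2 - 1)) * ‖z‖ ^ (p - 4) * (‖z‖ * ‖z‖) := by
                refine mul_le_mul_of_nonneg_left hQ (by positivity)
            _ = 2 * (p * (p/2 - 1)) * (‖z‖ ^ (p - 4) * ‖z‖ * ‖z‖) := by ring
            _ = 2 * (p * (p/2 - 1)) * ‖z‖ ^ (p - 2) := by
                rcases eq_or_ne z 0 with rfl | hz
                · simp [Real.zero_rpow (show p - 2 ≠ 0 by intro h; nlinarith [h])]
                · have hzn : ‖z‖ ≠ 0 := norm_ne_zero_iff.2 hz
                  rw [show p - 2 = ((p - 4) + 1) + 1 by ring]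
                  rw [Real.rpow_add_one hzn]
                  try rw [Real.rpow_add_one hzn]
                  try ring
        have htend : Filter.Tendsto
            (fun z : ℂ => 2 * (p * (p/2 - 1)) * ‖z‖ ^ (p - 2)) (nhds 0) (nhds 0) := by
          have hcont : ContinuousAt (fun x : ℝ => 2 * (p * (p/2 - 1)) * x ^ (p - 2)) 0 :=
            continuousAt_const.mul (Real.continuousAt_rpow_const 0 _ (Or.inr (by linarith)))
          have hz0 : 2 * (p * (p/2 - 1)) * (0:ℝ) ^ (p - 2) = 0 := by
            rw [Real.zero_rpow (by intro h; nlinarith [h])]; ring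
          have := hcont.tendsto
          rw [hz0] at this
          exact this.comp tendsto_norm_zero
        have h0 : Filter.Tendsto (fun z : ℂ =>
            (2 * (p * (p/2 - 1)) * ((‖z‖ ^ 2 : ℝ) ^ (p/2 - 2))) •
              ContinuousLinearMap.smulRightL ℝ ℂ (ℂ →L[ℝ] ℝ) (B z) (B z)) (nhds 0) (nhds 0) :=
          squeeze_zero_norm hbound htend
        have : ContinuousAt (fun z : ℂ =>
            (2 * (p * (p/2 - 1)) * ((‖z‖ ^ 2 : ℝ) ^ (p/2 - 2))) •
              ContinuousLinearMap.smulRightL ℝ ℂ (ℂ →L[ℝ] ℝ) (B z) (B z)) 0 := by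
          show Filter.Tendsto _ (nhds 0) (nhds
            ((2 * (p * (p/2 - 1)) * ((‖(0:ℂ)‖ ^ 2 : ℝ) ^ (p/2 - 2))) •
              ContinuousLinearMap.smulRightL ℝ ℂ (ℂ →L[ℝ] ℝ) (B (0:ℂ)) (B (0:ℂ))))
          rw [Q_zero, smul_zero]
          exact h0
        exact this
      · have hx : (‖z‖ ^ 2 : ℝ) ≠ 0 := by simpa using hz
        refine ContinuousAt.smul (f := fun z : ℂ => 2 * (p * (p/2 - 1)) * ((‖z‖ ^ 2 : ℝ) ^ (p/2 - 2))) (continuousAt_const.mul ?_) hQcont.continuousAt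
        have hin : ContinuousAt (fun y : ℂ => (‖y‖ ^ 2 : ℝ)) z :=
          (continuous_norm.pow 2).continuousAt
        have hout : ContinuousAt (fun x : ℝ => x ^ (p/2 - 2)) (‖z‖ ^ 2) :=
          Real.continuousAt_rpow_const _ _ (Or.inl hx)
        exact ContinuousAt.comp (x := z) hout hin
  haveI : ContinuousAdd (ℂ →L[ℝ] ℂ →L[ℝ] ℝ) :=
    (inferInstance : IsTopologicalAddGroup (ℂ →L[ℝ] ℂ →L[ℝ] ℝ)).toContinuousAdd
  exact hc1.add hc2

end Hess



/-- The map `z ↦ |z|^p` on `ℂ ≅ ℝ²` is `C²` for `p ≥ 2`; its Hessian quadratic form at `φ`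
in direction `v` equals `p|φ|^{p-2}|v|² + p(p-2)|φ|^{p-4}(Re(φ v̄))²` (second term interpreted
as `0` when `φ = 0` and `p > 2`), and is bounded above by `p(p-1)|φ|^{p-2}|v|²`. -/
theorem hessian_of_abs_rpow (p : ℝ) (hp : 2 ≤ p) :
    ContDiff ℝ 2 (fun z : ℂ => ‖z‖ ^ p) ∧
    ∀ φ v : ℂ,
      iteratedFDeriv ℝ 2 (fun z : ℂ => ‖z‖ ^ p) φ ![v, v] =
        p * ‖φ‖ ^ (p - 2) * ‖v‖ ^ 2 +
          (if φ = 0 then 0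
            else p * (p - 2) * ‖φ‖ ^ (p - 4) * ((φ * (starRingEnd ℂ) v).re) ^ 2) ∧
      iteratedFDeriv ℝ 2 (fun z : ℂ => ‖z‖ ^ p) φ ![v, v] ≤
        p * (p - 1) * ‖φ‖ ^ (p - 2) * ‖v‖ ^ 2 := by
  classical
  have hf := Hess.hasFDerivAt_f p hp
  have hF := Hess.hasFDerivAt_F p hp
  have hdf : (fderiv ℝ fun z : ℂ => ‖z‖ ^ p) = Hess.F p :=
    funext fun z => (hf z).fderiv
  have hdF : fderiv ℝ (Hess.F p) = Hess.G p := funext fun z => (hF z).fderiv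
  have hcd : ContDiff ℝ 2 (fun z : ℂ => ‖z‖ ^ p) := by
    rw [show (2 : WithTop ℕ∞) = 1 + 1 by norm_num, contDiff_succ_iff_fderiv]
    refine ⟨fun z => (hf z).differentiableAt, by simp, ?_⟩
    rw [hdf, contDiff_one_iff_fderiv]
    exact ⟨fun z => (hF z).differentiableAt, by rw [hdF]; exact Hess.continuous_G p hp⟩
  refine ⟨hcd, fun φ v => ?_⟩
  have hit : iteratedFDeriv ℝ 2 (fun z : ℂ => ‖z‖ ^ p) φ ![v, v] = Hess.G p φ v v := by
    rw [iteratedFDeriv_two_apply, hdf, hdF]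
    simp
  have hG : Hess.G p φ v v
      = p * ‖φ‖ ^ (p - 2) * ‖v‖ ^ 2
        + p * (p - 2) * ‖φ‖ ^ (p - 4) * (Hess.B φ v) ^ 2 := by
    have h1 := Hess.pow_eq1 p φ
    have h2 := Hess.pow_eq2 p φ
    unfold Hess.G
    simp only [ContinuousLinearMap.add_apply, ContinuousLinearMap.smul_apply,
      Hess.smulRightL_apply, ContinuousLinearMap.smulRight_apply, smul_eq_mul,
      Hess.B_self, h1, h2]
    ring
  constructor
  · rw [hit, hG]
    congr 1
    split_ifs with h
    · subst h
      simp [Hess.B_zero]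
    · rw [Hess.B_apply]
  · rw [hit, hG]
    rcases eq_or_ne φ 0 with rfl | hφ
    · rw [show Hess.B 0 v = 0 by rw [Hess.B_zero]; simp]
      have hp2 : (0:ℝ) ≤ p * (p - 2) := by nlinarith
      have hA : (0:ℝ) ≤ ‖(0:ℂ)‖ ^ (p - 2) * ‖v‖ ^ 2 := by positivity
      nlinarith [mul_nonneg hp2 hA]
    · have hφpos : (0:ℝ) < ‖φ‖ := norm_pos_iff.2 hφ
      have habs := Hess.abs_B_le φ v
      have hB2 : (Hess.B φ v) ^ 2 ≤ (‖φ‖ * ‖v‖) ^ 2 := by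
        rw [← sq_abs (Hess.B φ v)]
        exact pow_le_pow_left₀ (abs_nonneg _) habs 2
      have e4 : ‖φ‖ ^ (p - 4) * ‖φ‖ ^ (2:ℕ) = ‖φ‖ ^ (p - 2) := by
        rw [← Real.rpow_natCast ‖φ‖ 2, ← Real.rpow_add hφpos]
        norm_num
        ring_nf
      have hcoef : (0:ℝ) ≤ p * (p - 2) * ‖φ‖ ^ (p - 4) :=
        mul_nonneg (by nlinarith) (Real.rpow_nonneg (norm_nonneg φ) _)
      calc p * ‖φ‖ ^ (p - 2) * ‖v‖ ^ 2 + p * (p - 2) * ‖φ‖ ^ (p - 4) * (Hess.B φ v) ^ 2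
          ≤ p * ‖φ‖ ^ (p - 2) * ‖v‖ ^ 2
            + p * (p - 2) * ‖φ‖ ^ (p - 4) * (‖φ‖ * ‖v‖) ^ 2 :=
            add_le_add_right (mul_le_mul_of_nonneg_left hB2 hcoef) _
        _ = p * (p - 1) * ‖φ‖ ^ (p - 2) * ‖v‖ ^ 2 := by
            linear_combination (p * (p - 2) * ‖v‖ ^ 2) * e4

end
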